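/- Fix $n\ge 5$ and $2\le k\le n-2$. Let $g:S_n\to\mathbb{R}$ be of the form $g=\alpha_1\frac{p-1}{n-1}+\alpha_2\frac{p^2-2}{n^2-2}+\alpha_3(1-2t)$ with $\alpha_1+\alpha_2+\alpha_3=1$ (so $g(e)=1$). Let $\sigma_k$ have $p(\sigma_k)=k$, $t(\sigma_k)=0$; let $\eta$ have $p(\eta)=0$, $t(\eta)=1$; let $\theta$ have $p(\theta)=t(\theta)=0$. Then $\max\{g(\sigma_k),g(\eta),g(\theta)\}\ge\frac{k-2}{n^2-kn+k-2}$. -/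
import Mathlib


/-- Number of fixed points of a permutation. -/
def numFixedPoints {n : ℕ} (σ : Equiv.Perm (Fin n)) : ℕ :=
  (Finset.univ.filter (fun i : Fin n => σ i = i)).card

/-- Number of 2-cycles of a permutation. -/
def numTwoCycles {n : ℕ} (σ : Equiv.Perm (Fin n)) : ℕ :=
  (Finset.univ.filter (fun x : Fin n × Fin n =>
      x.1 < x.2 ∧ σ x.1 = x.2 ∧ σ x.2 = x.1)).card

set_option maxHeartbeats 1000000 in
theorem stmt_18 (n k : ℕ) (hn : 5 ≤ n) (hk2 : 2 ≤ k) (hkn : k ≤ n - 2)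
    (α₁ α₂ α₃ : ℝ) (hα : α₁ + α₂ + α₃ = 1)
    (g : Equiv.Perm (Fin n) → ℝ)
    (hg : ∀ σ, g σ = α₁ * ((numFixedPoints σ : ℝ) - 1) / ((n : ℝ) - 1)
        + α₂ * ((numFixedPoints σ : ℝ) ^ 2 - 2) / ((n : ℝ) ^ 2 - 2)
        + α₃ * (1 - 2 * (numTwoCycles σ : ℝ)))
    (σk η θ : Equiv.Perm (Fin n))
    (hσk : numFixedPoints σk = k ∧ numTwoCycles σk = 0)
    (hη : numFixedPoints η = 0 ∧ numTwoCycles η = 1)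
    (hθ : numFixedPoints θ = 0 ∧ numTwoCycles θ = 0) :
    ((k : ℝ) - 2) / ((n : ℝ) ^ 2 - (k : ℝ) * (n : ℝ) + (k : ℝ) - 2)
      ≤ max (g σk) (max (g η) (g θ)) := by
  obtain ⟨hσp, hσt⟩ := hσk
  obtain ⟨hηp, hηt⟩ := hη
  obtain ⟨hθp, hθt⟩ := hθ
  have hn' : (5:ℝ) ≤ (n:ℝ) := by exact_mod_cast hn
  have hk2' : (2:ℝ) ≤ (k:ℝ) := by exact_mod_cast hk2
  have hkn0 : k + 2 ≤ n := by omega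
  have hkn' : (k:ℝ) + 2 ≤ (n:ℝ) := by exact_mod_cast hkn0
  set N := (n:ℝ) with hN
  set K := (k:ℝ) with hK
  have hN1 : N - 1 ≠ 0 := by intro h; nlinarith
  have hN2 : N ^ 2 - 2 ≠ 0 := by intro h; nlinarith
  have hD : 0 < N ^ 2 - K * N + K - 2 := by nlinarith
  have gσ : g σk = α₁ * (K - 1) / (N - 1) + α₂ * (K ^ 2 - 2) / (N ^ 2 - 2) + α₃ := by
    rw [hg, hσp, hσt]; push_cast; ring
  have gη : g η = α₁ * (0 - 1) / (N - 1) + α₂ * (0 - 2) / (N ^ 2 - 2) - α₃ := by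
    rw [hg, hηp, hηt]; push_cast; ring
  have gθ : g θ = α₁ * (0 - 1) / (N - 1) + α₂ * (0 - 2) / (N ^ 2 - 2) + α₃ := by
    rw [hg, hθp, hθt]; push_cast; ring
  have hα3 : α₃ = 1 - α₁ - α₂ := by linarith
  have key : (2 * N * (N - 2)) * g σk + (K * N * (N - K)) * g η
      + ((N - 2) * (N - K) * (K - 2)) * g θ = 2 * K * (K - 2) := by
    rw [gσ, gη, gθ, hα3]
    field_simp
    ring
  set M := max (g σk) (max (g η) (g θ)) with hM
  have hMσ : g σk ≤ M := le_max_left _ _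
  have hMη : g η ≤ M := le_trans (le_max_left _ _) (le_max_right _ _)
  have hMθ : g θ ≤ M := le_trans (le_max_right _ _) (le_max_right _ _)
  have hw1 : (0:ℝ) ≤ 2 * N * (N - 2) :=
    mul_nonneg (mul_nonneg (by norm_num) (by linarith)) (by linarith)
  have hw2 : (0:ℝ) ≤ K * N * (N - K) :=
    mul_nonneg (mul_nonneg (by linarith) (by linarith)) (by linarith)
  have hw3 : (0:ℝ) ≤ (N - 2) * (N - K) * (K - 2) :=
    mul_nonneg (mul_nonneg (by linarith) (by linarith)) (by linarith)
  have h1 := mul_le_mul_of_nonneg_left hMσ hw1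
  have h2 := mul_le_mul_of_nonneg_left hMη hw2
  have h3 := mul_le_mul_of_nonneg_left hMθ hw3
  have hWM : (2 * N * (N - 2)) * M + (K * N * (N - K)) * M
      + ((N - 2) * (N - K) * (K - 2)) * M
      = 2 * K * (N ^ 2 - K * N + K - 2) * M := by ring
  have hfin : 2 * K * (K - 2) ≤ 2 * K * (N ^ 2 - K * N + K - 2) * M := by
    linarith
  rw [div_le_iff₀ hD]
  nlinarith [hfin, hk2']
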